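/- Let η, L, σ², c, s > 0 with ηc < 1, let k ≥ 1 be an integer, let 0 < μ_k < μ_{k+1}, and set a_k = ηLσ²/(2cks), a_{k+1} = ηLσ²/(2c(k+1)s), and ρ = 1 − ηc. Let E be a real number with E > a_k and (μ_{k+1} − μ_k)(E − a_k) > μ_k (a_k − a_{k+1}), and let t_{k−1} ≥ 0. Define t_k = t_{k−1} + (μ_k / (−ln(1 − ηc))) · [ ln(μ_{k+1} − μ_k) − ln(ηLσ²μ_k) + ln( 2ck(k+1)sE − ηL(k+1)σ² ) ]. Then: (i) ln(μ_{k+1} − μ_k) − ln(ηLσ²μ_k) + ln(2ck(k+1)sE − ηL(k+1)σ²) = ln( (μ_{k+1} − μ_k)(E − a_k) / (μ_k (a_k − a_{k+1})) ); and (ii) t_k is the unique t > t_{k−1} at which the function f(t) = a_k + ρ^{(t − t_{k−1})/μ_k}(E − a_k) satisfies f′(t) = (ln ρ / μ_{k+1}) ( f(t) − a_{k+1} ). -/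

import Mathlib

private lemma expand_aux (lρ μk μk1 u E ak ak1 : ℝ) (h1 : μk ≠ 0) (h2 : μk1 ≠ 0) :
    u * (lρ / μk) * (E - ak) - lρ / μk1 * (ak + u * (E - ak) - ak1) =
      (lρ / (μk * μk1)) * (u * (E - ak) * (μk1 - μk) - μk * (ak - ak1)) := by
  field_simp
  ring

set_option maxHeartbeats 1600000 in
/-- Theorem 2 (bound-optimal policy for adaptive fastest-k SGD): with error floors
a_k = ηLσ²/(2cks), a_{k+1} = ηLσ²/(2c(k+1)s) and ρ = 1 − ηc, the switching time
t_k = t_{k−1} + (μ_k/(−ln(1−ηc)))[ln(μ_{k+1}−μ_k) − ln(ηLσ²μ_k) + ln(2ck(k+1)sE − ηL(k+1)σ²)]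
satisfies the stated logarithm identity and is the unique time t > t_{k−1} at which the
decrease rate of the current bound f equals the initial decrease rate of the switched bound. -/
theorem bound_optimal_policy
    (η L σ2 c s : ℝ) (hη : 0 < η) (hL : 0 < L) (hσ2 : 0 < σ2) (hc : 0 < c) (hs : 0 < s)
    (hηc : η * c < 1)
    (k : ℕ) (hk : 1 ≤ k)
    (μk μk1 : ℝ) (hμk : 0 < μk) (hμ : μk < μk1)
    (ak ak1 ρ : ℝ)
    (hak : ak = η * L * σ2 / (2 * c * k * s))
    (hak1 : ak1 = η * L * σ2 / (2 * c * (k + 1) * s))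
    (hρ : ρ = 1 - η * c)
    (E tkm1 : ℝ) (hE : ak < E) (htkm1 : 0 ≤ tkm1)
    (hgap : μk * (ak - ak1) < (μk1 - μk) * (E - ak))
    (tk : ℝ)
    (htk : tk = tkm1 + μk / (-Real.log (1 - η * c)) *
        (Real.log (μk1 - μk) - Real.log (η * L * σ2 * μk) +
          Real.log (2 * c * k * (k + 1) * s * E - η * L * (k + 1) * σ2)))
    (f : ℝ → ℝ) (hf : f = fun t => ak + ρ ^ ((t - tkm1) / μk) * (E - ak)) :
    (Real.log (μk1 - μk) - Real.log (η * L * σ2 * μk) +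
        Real.log (2 * c * k * (k + 1) * s * E - η * L * (k + 1) * σ2) =
      Real.log ((μk1 - μk) * (E - ak) / (μk * (ak - ak1)))) ∧
    tkm1 < tk ∧
    ∀ t : ℝ, tkm1 < t →
      (deriv f t = Real.log ρ / μk1 * (f t - ak1) ↔ t = tk) := by
  have hk0 : (0:ℝ) < (k:ℝ) := by exact_mod_cast Nat.lt_of_lt_of_le Nat.zero_lt_one hk
  have hk1 : (0:ℝ) < (k:ℝ) + 1 := by linarith
  have hρ0 : (0:ℝ) < ρ := by rw [hρ]; linarith
  have hρ1 : ρ < 1 := by rw [hρ]; nlinarith [mul_pos hη hc]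
  have hlρ : Real.log ρ < 0 := Real.log_neg hρ0 hρ1
  have hlρne : Real.log ρ ≠ 0 := ne_of_lt hlρ
  have hA : 0 < E - ak := by linarith
  have hden : 0 < 2 * c * (k:ℝ) * s := by positivity
  have hden1 : 0 < 2 * c * ((k:ℝ) + 1) * s := by positivity
  have hnum : 0 < η * L * σ2 := by positivity
  have hD : 0 < ak - ak1 := by
    rw [hak, hak1]
    have h1 : η * L * σ2 / (2 * c * ((k:ℝ) + 1) * s) < η * L * σ2 / (2 * c * (k:ℝ) * s) :=
      div_lt_div_of_pos_left hnum hden (by nlinarith [mul_pos hc hs])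
    linarith
  have hgap' : 0 < μk * (ak - ak1) := mul_pos hμk hD
  have hmm : 0 < μk1 - μk := by linarith
  have hMA : 0 < (μk1 - μk) * (E - ak) := mul_pos hmm hA
  have hXpos : 0 < 2 * c * (k:ℝ) * s * E - η * L * σ2 := by
    have h1 : ak < E := hE
    rw [hak] at h1
    have := (div_lt_iff₀ hden).mp h1
    nlinarith
  have hX2 : (0:ℝ) < 2 * c * (k:ℝ) * ((k:ℝ) + 1) * s * E - η * L * ((k:ℝ) + 1) * σ2 := by
    nlinarith
  -- Part 1: log identity
  have hRalt : (μk1 - μk) * (E - ak) / (μk * (ak - ak1)) =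
      (μk1 - μk) * (2 * c * (k:ℝ) * ((k:ℝ) + 1) * s * E - η * L * ((k:ℝ) + 1) * σ2) /
        (η * L * σ2 * μk) := by
    rw [div_eq_div_iff (by positivity) (by positivity)]
    rw [hak, hak1]
    field_simp
    ring
  have part1 : Real.log (μk1 - μk) - Real.log (η * L * σ2 * μk) +
        Real.log (2 * c * (k:ℝ) * ((k:ℝ) + 1) * s * E - η * L * ((k:ℝ) + 1) * σ2) =
      Real.log ((μk1 - μk) * (E - ak) / (μk * (ak - ak1))) := by
    rw [hRalt, Real.log_div (by positivity) (by positivity), Real.log_mul (ne_of_gt hmm) (ne_of_gt hX2)]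
    ring
  -- the value V = exp(log ρ * x) at the switching point
  set V : ℝ := μk * (ak - ak1) / ((μk1 - μk) * (E - ak)) with hV
  have hV0 : 0 < V := div_pos hgap' hMA
  have hV1 : V < 1 := (div_lt_one hMA).mpr hgap
  have hlogV : Real.log V = -Real.log ((μk1 - μk) * (E - ak) / (μk * (ak - ak1))) := by
    rw [hV, ← Real.log_inv]
    congr 1
    rw [inv_div]
  -- tk rewritten
  have htk' : tk = tkm1 + μk * (Real.log V / Real.log ρ) := by
    rw [htk, ← hρ, part1,
      show Real.log ((μk1 - μk) * (E - ak) / (μk * (ak - ak1))) = -Real.log V by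
        rw [hlogV]; ring]
    congr 1
    rw [div_mul_eq_mul_div, mul_div_assoc, neg_div_neg_eq]
  have part2 : tkm1 < tk := by
    rw [htk']
    have hlV : Real.log V < 0 := Real.log_neg hV0 hV1
    have h2 : 0 < Real.log V / Real.log ρ := div_pos_of_neg_of_neg hlV hlρ
    have := mul_pos hμk h2
    linarith
  refine ⟨part1, part2, ?_⟩
  -- derivative computation
  have hfg : f = fun t => ak + Real.exp (Real.log ρ * ((t - tkm1) / μk)) * (E - ak) := by
    rw [hf]; funext t; rw [Real.rpow_def_of_pos hρ0]
  have hderiv : ∀ t : ℝ, deriv f t =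
      Real.exp (Real.log ρ * ((t - tkm1) / μk)) * (Real.log ρ / μk) * (E - ak) := by
    intro t
    rw [hfg]
    have h0 : HasDerivAt (fun t : ℝ => (t - tkm1) / μk) (1 / μk) t :=
      ((hasDerivAt_id t).sub_const tkm1).div_const μk
    have h1 : HasDerivAt (fun t : ℝ => Real.log ρ * ((t - tkm1) / μk)) (Real.log ρ / μk) t := by
      simpa [mul_one_div, div_eq_mul_inv] using h0.const_mul (Real.log ρ)
    have h2 := ((h1.exp.mul_const (E - ak)).const_add ak)
    exact h2.deriv
  have hft : ∀ t : ℝ, f t = ak + Real.exp (Real.log ρ * ((t - tkm1) / μk)) * (E - ak) := by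
    intro t; rw [hfg]
  intro t ht
  rw [hderiv, hft]
  obtain ⟨u, hu⟩ : ∃ u : ℝ, Real.exp (Real.log ρ * ((t - tkm1) / μk)) = u := ⟨_, rfl⟩
  rw [hu]
  -- equation is equivalent to u = V
  have expand : u * (Real.log ρ / μk) * (E - ak) -
      Real.log ρ / μk1 * (ak + u * (E - ak) - ak1) =
      (Real.log ρ / (μk * μk1)) * (u * (E - ak) * (μk1 - μk) - μk * (ak - ak1)) :=
    expand_aux _ _ _ _ _ _ _ (ne_of_gt hμk) (ne_of_gt (lt_trans hμk hμ))
  have hμk1 : 0 < μk1 := lt_trans hμk hμ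
  have step1 : (u * (Real.log ρ / μk) * (E - ak) =
      Real.log ρ / μk1 * (ak + u * (E - ak) - ak1)) ↔ u = V := by
    rw [← sub_eq_zero, expand, mul_eq_zero]
    have hfac : Real.log ρ / (μk * μk1) ≠ 0 :=
      div_ne_zero hlρne (by positivity)
    rw [or_iff_right hfac, sub_eq_zero, hV, eq_div_iff (ne_of_gt hMA)]
    constructor <;> intro h <;> linear_combination h
  have step2 : u = V ↔ Real.log ρ * ((t - tkm1) / μk) = Real.log V := by
    rw [← hu]
    rw [show V = Real.exp (Real.log V) from (Real.exp_log hV0).symm, Real.exp_eq_exp,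
      Real.log_exp]
  have step3 : (Real.log ρ * ((t - tkm1) / μk) = Real.log V) ↔ t = tk := by
    constructor
    · intro h
      have h1 : (t - tkm1) / μk = Real.log V / Real.log ρ := by
        rw [eq_div_iff hlρne]
        linear_combination h
      have h2 : t - tkm1 = Real.log V / Real.log ρ * μk := (div_eq_iff (ne_of_gt hμk)).mp h1
      rw [htk']
      linear_combination h2
    · intro h
      rw [h, htk']
      have h1 : tkm1 + μk * (Real.log V / Real.log ρ) - tkm1 = μk * (Real.log V / Real.log ρ) := by
        ring
      rw [h1, mul_div_cancel_left₀ _ (ne_of_gt hμk), mul_comm, div_mul_cancel₀ _ hlρne]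
  rw [step1, step2, step3]
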